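/- arXiv:1102.0415 — 2 statements merged into one kernel-verified Lean document; each statement's English description precedes it below -/
import Mathlib

section
/- Let X, Y be real Banach spaces and F, G : X ⇒ Y be multifunctions. Suppose F is Lipschitz-like around (x̄,ȳ) ∈ Gr F with constant l > 0, G is Lipschitz-like around (x̄,z̄) ∈ Gr G with constant k > 0, and the pair (F,G) is locally sum-stable around (x̄,ȳ,z̄). Then the multifunction F + G is Lipschitz-like around (x̄, ȳ + z̄) with constant l + k. -/
open Metric Set Filter Topology Pointwise

/-- `F : X ⇒ Y` is Lipschitz-like around `(xb, yb)` with constant `L`. -/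
def LipschitzLikeAround {X Y : Type*} [NormedAddCommGroup X] [NormedAddCommGroup Y]
    (F : X → Set Y) (xb : X) (yb : Y) (L : ℝ) : Prop :=
  ∃ U ∈ 𝓝 xb, ∃ V ∈ 𝓝 yb, ∀ x ∈ U, ∀ u ∈ U,
    F x ∩ V ⊆ F u + closedBall (0 : Y) (L * ‖x - u‖)

/-- The pair `(F, G)` is locally sum-stable around `(xb, yb, zb)`. -/
def LocSumStable {X Y : Type*} [NormedAddCommGroup X] [NormedAddCommGroup Y]
    (F G : X → Set Y) (xb : X) (yb zb : Y) : Prop :=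
  ∀ ε > (0 : ℝ), ∃ δ > (0 : ℝ), ∀ x ∈ ball xb δ, ∀ w ∈ (F x + G x) ∩ ball (yb + zb) δ,
    ∃ y ∈ F x ∩ ball yb ε, ∃ z ∈ G x ∩ ball zb ε, w = y + z

/-- the sum of Lipschitz-like multifunctions is Lipschitz-like,
provided the pair is locally sum-stable. -/
theorem stmt10 {X Y : Type*}
    [NormedAddCommGroup X] [NormedSpace ℝ X] [CompleteSpace X]
    [NormedAddCommGroup Y] [NormedSpace ℝ Y] [CompleteSpace Y]
    (F G : X → Set Y) (xb : X) (yb zb : Y)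
    (hybF : yb ∈ F xb) (hzbG : zb ∈ G xb)
    (l k : ℝ) (hl : 0 < l) (hk : 0 < k)
    (hF : LipschitzLikeAround F xb yb l)
    (hG : LipschitzLikeAround G xb zb k)
    (hsum : LocSumStable F G xb yb zb) :
    LipschitzLikeAround (fun x => F x + G x) xb (yb + zb) (l + k) := by
  obtain ⟨UF, hUF, VF, hVF, hFprop⟩ := hF
  obtain ⟨UG, hUG, VG, hVG, hGprop⟩ := hG
  obtain ⟨ε, hε, hεF, hεG⟩ : ∃ ε > (0:ℝ), ball yb ε ⊆ VF ∧ ball zb ε ⊆ VG := by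
    obtain ⟨ε1, hε1, h1⟩ := Metric.mem_nhds_iff.mp hVF
    obtain ⟨ε2, hε2, h2⟩ := Metric.mem_nhds_iff.mp hVG
    exact ⟨min ε1 ε2, lt_min hε1 hε2,
      (ball_subset_ball (min_le_left _ _)).trans h1,
      (ball_subset_ball (min_le_right _ _)).trans h2⟩
  obtain ⟨δ, hδ, hδprop⟩ := hsum ε hε
  refine ⟨ball xb δ ∩ UF ∩ UG, ?_, ball (yb + zb) δ, ball_mem_nhds _ hδ, ?_⟩
  · exact Filter.inter_mem (Filter.inter_mem (ball_mem_nhds _ hδ) hUF) hUG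
  · rintro x ⟨⟨hxδ, hxF⟩, hxG⟩ u ⟨⟨huδ, huF⟩, huG⟩ w ⟨hwFG, hwδ⟩
    obtain ⟨y, ⟨hyF, hyb⟩, z, ⟨hzG, hzb⟩, rfl⟩ := hδprop x hxδ _ ⟨hwFG, hwδ⟩
    obtain ⟨y', hy'F, p, hp, hyp⟩ := hFprop x hxF u huF ⟨hyF, hεF hyb⟩
    obtain ⟨z', hz'G, q, hq, hzq⟩ := hGprop x hxG u huG ⟨hzG, hεG hzb⟩
    refine ⟨y' + z', ⟨y', hy'F, z', hz'G, rfl⟩, p + q, ?_, ?_⟩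
    · rw [mem_closedBall_zero_iff] at hp hq ⊢
      calc ‖p + q‖ ≤ ‖p‖ + ‖q‖ := norm_add_le _ _
        _ ≤ l * ‖x - u‖ + k * ‖x - u‖ := add_le_add hp hq
        _ = (l + k) * ‖x - u‖ := by ring
    · rw [← hyp, ← hzq]; beta_reduce; abel
end

section
/- Let X, Y be real Banach spaces, F : X ⇒ Y a multifunction, (x̄,ȳ) ∈ Gr F and r, s, l > 0 such that F(x) ∩ B(ȳ,s) ⊆ F(x′) + l‖x−x′‖·D_Y for every x, x′ ∈ B(x̄,r). Then for every (x,y) ∈ Gr F with x ∈ B(x̄, 2⁻¹r) and y ∈ B(ȳ,s), F is l-pseudocalm at (x,y); consequently, F⁻¹ is l⁻¹-open at (y,x) for all such (x,y). -/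
open Metric Set Filter Topology Pointwise

/-- `F` is `l`-pseudocalm at `(x, y)`: there is a neighborhood `U` of `x` such that
`d(y, F(x')) ≤ l‖x' - x‖` for every `x' ∈ U` (with `d(·,∅) = ∞`). -/
def IsPseudocalmAt {X Y : Type*} [NormedAddCommGroup X] [NormedAddCommGroup Y]
    (F : X → Set Y) (x : X) (y : Y) (l : ℝ) : Prop :=
  ∃ U ∈ 𝓝 x, ∀ x' ∈ U, EMetric.infEdist y (F x') ≤ ENNReal.ofReal (l * ‖x' - x‖)

/-- `T : Y ⇒ X` is `c`-open at `(y, x)`. -/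
def IsOpenAtPt {Y X : Type*} [NormedAddCommGroup Y] [NormedAddCommGroup X]
    (T : Y → Set X) (y : Y) (x : X) (c : ℝ) : Prop :=
  ∃ ε > (0 : ℝ), ∀ ρ ∈ Set.Ioo (0 : ℝ) ε, ball x (ρ * c) ⊆ ⋃ y' ∈ ball y ρ, T y'

/-- a locally uniform Lipschitz-like estimate yields pseudocalmness
of `F` and openness of `F⁻¹` at all nearby graph points. -/
theorem stmt18 {X Y : Type*}
    [NormedAddCommGroup X] [NormedSpace ℝ X] [CompleteSpace X]
    [NormedAddCommGroup Y] [NormedSpace ℝ Y] [CompleteSpace Y]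
    (F : X → Set Y) (xb : X) (yb : Y) (hgr : yb ∈ F xb)
    (r s l : ℝ) (hr : 0 < r) (hs : 0 < s) (hl : 0 < l)
    (hF : ∀ x ∈ ball xb r, ∀ x' ∈ ball xb r,
      F x ∩ ball yb s ⊆ F x' + closedBall (0 : Y) (l * ‖x - x'‖)) :
    ∀ x y, y ∈ F x → x ∈ ball xb (2⁻¹ * r) → y ∈ ball yb s →
      IsPseudocalmAt F x y l ∧ IsOpenAtPt (fun y' => {x' | y' ∈ F x'}) y x l⁻¹ := by
  intro x y hyF hx hy
  have hxr : x ∈ ball xb r := ball_subset_ball (by linarith) hx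
  have key : ∀ x' ∈ ball xb r, ∃ z ∈ F x', ‖y - z‖ ≤ l * ‖x - x'‖ := by
    intro x' hx'
    have := hF x hxr x' hx' ⟨hyF, hy⟩
    rcases Set.mem_add.1 this with ⟨a, ha, b, hb, hab⟩
    refine ⟨a, ha, ?_⟩
    have : ‖y - a‖ = ‖b‖ := by
      rw [← hab]; simp [add_sub_cancel_left]
    rw [this]
    simpa using mem_closedBall_zero_iff.mp hb
  constructor
  · refine ⟨ball x (2⁻¹ * r), ball_mem_nhds _ (by positivity), ?_⟩
    intro x' hx'
    have hx'r : x' ∈ ball xb r := by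
      rw [mem_ball] at hx hx' ⊢
      calc dist x' xb ≤ dist x' x + dist x xb := dist_triangle _ _ _
        _ < 2⁻¹ * r + 2⁻¹ * r := by linarith
        _ = r := by ring
    obtain ⟨z, hz, hzle⟩ := key x' hx'r
    calc EMetric.infEdist y (F x') ≤ edist y z := EMetric.infEdist_le_edist_of_mem hz
      _ = ENNReal.ofReal ‖y - z‖ := by rw [edist_dist, dist_eq_norm]
      _ ≤ ENNReal.ofReal (l * ‖x' - x‖) := by
          apply ENNReal.ofReal_le_ofReal
          rw [norm_sub_rev x' x]; exact hzle
  · refine ⟨l * (2⁻¹ * r), by positivity, ?_⟩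
    intro ρ hρ x' hx'
    have hρ0 := hρ.1
    have hdist : dist x' x < ρ * l⁻¹ := mem_ball.1 hx'
    have hx'r : x' ∈ ball xb r := by
      rw [mem_ball] at hx ⊢
      have h1 : ρ * l⁻¹ < 2⁻¹ * r := by
        calc ρ * l⁻¹ < l * (2⁻¹ * r) * l⁻¹ :=
              mul_lt_mul_of_pos_right hρ.2 (inv_pos.2 hl)
          _ = 2⁻¹ * r := by field_simp
      calc dist x' xb ≤ dist x' x + dist x xb := dist_triangle _ _ _
        _ < 2⁻¹ * r + 2⁻¹ * r := by linarith
        _ = r := by ring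
    obtain ⟨z, hz, hzle⟩ := key x' hx'r
    refine Set.mem_iUnion₂.2 ⟨z, ?_, hz⟩
    rw [mem_ball, dist_comm, dist_eq_norm]
    calc ‖y - z‖ ≤ l * ‖x - x'‖ := hzle
      _ = l * dist x' x := by rw [norm_sub_rev, ← dist_eq_norm]
      _ < l * (ρ * l⁻¹) := by exact mul_lt_mul_of_pos_left hdist hl
      _ = ρ := by field_simp
end
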